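/- Let n ∈ ℕ, s_i = i/n for i ∈ {1,…,n}, and let 2 ≤ K < ∞ with weights w_1, …, w_K ≥ 0 not all zero and w_k > 0 for some k ≥ 2. With b_{i,j,k,ℓ} defined from these equispaced points as before, one has lim inf_{n→∞} (1/n) ∑_{i=1}^{n-k} ∑_{j=1}^{n-k} b_{i,i+k,j,j+k} ≥ 1 + (k−1)²/k² for every 2 ≤ k ≤ K; consequently lim inf_{n→∞} A_n > 2(∑_{k=1}^K w_k)², where A_n is the asymptotic-variance sum of Lemma 2. -/

import Mathlib

open Finset Filter

noncomputable def bCoef (s : ℕ → ℝ) (i j k l : ℕ) : ℝ :=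
  if i ≤ k then
    (if j ≤ k then 0
     else if j ≤ l then (s j - s k) ^ 2 / ((s j - s i) * (s l - s k))
     else (s l - s k) / (s j - s i))
  else
    (if l ≤ i then 0
     else if l ≤ j then (s l - s i) ^ 2 / ((s l - s k) * (s j - s i))
     else (s j - s i) / (s l - s k))

namespace EqP

noncomputable def s (n : ℕ) : ℕ → ℝ := fun m => (m : ℝ) / (n : ℝ)

lemma s_sub {n : ℕ} {p q : ℕ} (h : p ≤ q) :
    s n q - s n p = ((q - p : ℕ) : ℝ) / n := by
  simp only [s]
  rw [Nat.cast_sub h, sub_div]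

lemma s_lt {n : ℕ} (hn : 0 < n) {p q : ℕ} (h : p < q) : s n p < s n q := by
  have hn' : (0:ℝ) < n := by exact_mod_cast hn
  simp only [s]
  gcongr


lemma s_sub_pos {n : ℕ} (hn : 0 < n) {p q : ℕ} (h : p < q) : 0 < s n q - s n p :=
  sub_pos.mpr (s_lt hn h)

lemma bCoef_nonneg {n i j k l : ℕ} (hij : i < j) (hkl : k < l) :
    0 ≤ bCoef (s n) i j k l := by
  rcases Nat.eq_zero_or_pos n with rfl | hn
  · simp [bCoef, s]
  unfold bCoef
  split_ifs with h1 h2 h3 h4 h5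
  · exact le_rfl
  · exact div_nonneg (sq_nonneg _) (mul_nonneg (s_sub_pos hn hij).le (s_sub_pos hn hkl).le)
  · exact div_nonneg (s_sub_pos hn hkl).le (s_sub_pos hn hij).le
  · exact le_rfl
  · exact div_nonneg (sq_nonneg _) (mul_nonneg (s_sub_pos hn hkl).le (s_sub_pos hn hij).le)
  · exact div_nonneg (s_sub_pos hn hij).le (s_sub_pos hn hkl).le


lemma bA {n i k a b : ℕ} (hn : 0 < n) (hb : 1 ≤ b) (hik : i ≤ k) (hkb : k + b ≤ i + a) :
    bCoef (s n) i (i + a) k (k + b) = (b : ℝ) / a := by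
  have ha : 1 ≤ a := by omega
  have hn0 : (n:ℝ) ≠ 0 := by exact_mod_cast hn.ne'
  have ha0 : (a:ℝ) ≠ 0 := by exact_mod_cast (by omega : a ≠ 0)
  have hb0 : (b:ℝ) ≠ 0 := by exact_mod_cast (by omega : b ≠ 0)
  have e1 : s n (i+a) - s n i = (a:ℝ)/n := by
    rw [s_sub (by omega)]; congr 2; omega
  have e2 : s n (k+b) - s n k = (b:ℝ)/n := by
    rw [s_sub (by omega)]; congr 2; omega
  simp only [bCoef, if_pos hik, if_neg (by omega : ¬ (i + a ≤ k))]
  by_cases h : i + a ≤ k + b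
  · rw [if_pos h]
    have e3 : s n (i+a) - s n k = (b:ℝ)/n := by
      rw [s_sub (by omega)]; congr 2; omega
    rw [e3, e1, e2]
    field_simp
  · rw [if_neg h, e1, e2]
    field_simp

lemma bB {n i k a b : ℕ} (hn : 0 < n) (ha : 1 ≤ a) (hki : k ≤ i) (hia : i + a ≤ k + b) :
    bCoef (s n) i (i + a) k (k + b) = (a : ℝ) / b := by
  have hb : 1 ≤ b := by omega
  have hn0 : (n:ℝ) ≠ 0 := by exact_mod_cast hn.ne'
  have ha0 : (a:ℝ) ≠ 0 := by exact_mod_cast (by omega : a ≠ 0)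
  have hb0 : (b:ℝ) ≠ 0 := by exact_mod_cast (by omega : b ≠ 0)
  have e1 : s n (i+a) - s n i = (a:ℝ)/n := by
    rw [s_sub (by omega)]; congr 2; omega
  have e2 : s n (k+b) - s n k = (b:ℝ)/n := by
    rw [s_sub (by omega)]; congr 2; omega
  by_cases hik : i ≤ k
  · -- then i = k
    have : i = k := le_antisymm hik hki
    subst this
    simp only [bCoef, if_pos le_rfl, if_neg (by omega : ¬ (i + a ≤ i)),
      if_pos (by omega : i + a ≤ i + b), e1, e2]
    field_simp
  · simp only [bCoef, if_neg hik, if_neg (by omega : ¬ (k + b ≤ i))]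
    by_cases h : k + b ≤ i + a
    · rw [if_pos h]
      have e3 : s n (k+b) - s n i = (a:ℝ)/n := by
        rw [s_sub (by omega)]; congr 2; omega
      rw [e3, e1, e2]
      field_simp
    · rw [if_neg h, e1, e2]
      field_simp

lemma bC {n i c : ℕ} (hn : 0 < n) (hc : 2 ≤ c) :
    bCoef (s n) i (i + c) (i + 1) (i + 1 + c) = ((c:ℝ) - 1) ^ 2 / (c:ℝ) ^ 2 := by
  have hn0 : (n:ℝ) ≠ 0 := by exact_mod_cast hn.ne'
  have hc0 : (c:ℝ) ≠ 0 := by exact_mod_cast (by omega : c ≠ 0)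
  have e1 : s n (i+c) - s n i = (c:ℝ)/n := by
    rw [s_sub (by omega)]; congr 2; omega
  have e2 : s n (i+1+c) - s n (i+1) = (c:ℝ)/n := by
    rw [s_sub (by omega)]; congr 2; omega
  have e3 : s n (i+c) - s n (i+1) = ((c:ℝ)-1)/n := by
    rw [s_sub (by omega)]
    have : i + c - (i+1) = c - 1 := by omega
    rw [this, Nat.cast_sub (by omega)]
    norm_num
  simp only [bCoef, if_pos (by omega : i ≤ i+1), if_neg (by omega : ¬ (i + c ≤ i + 1)),
    if_pos (by omega : i + c ≤ i + 1 + c), e1, e2, e3]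
  field_simp


lemma aux_tendsto (m : ℕ) (C : ℝ) :
    Tendsto (fun n : ℕ => ((n - m : ℕ) : ℝ) / n * C) atTop (nhds C) := by
  have h : ∀ᶠ n : ℕ in atTop, (1 - (m:ℝ)/n) * C = ((n - m : ℕ) : ℝ) / n * C := by
    filter_upwards [eventually_ge_atTop (max m 1)] with n hn
    have h1 : m ≤ n := le_trans (le_max_left _ _) hn
    have h2 : (0:ℝ) < n := by
      have : 1 ≤ n := le_trans (le_max_right _ _) hn
      exact_mod_cast this
    rw [Nat.cast_sub h1, sub_div, div_self h2.ne']
  have h2 : Tendsto (fun n : ℕ => (1 - (m:ℝ)/n) * C) atTop (nhds ((1 - 0) * C)) :=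
    (tendsto_const_nhds.sub (tendsto_const_div_atTop_nhds_zero_nat (m:ℝ))).mul tendsto_const_nhds
  simpa using h2.congr' h

lemma liminf_ge {f g : ℕ → ℝ} {c B : ℝ} (hle : ∀ᶠ n in atTop, g n ≤ f n)
    (hB : ∀ᶠ n in atTop, f n ≤ B) (hg : Tendsto g atTop (nhds c)) :
    c ≤ atTop.liminf f := by
  rw [← hg.liminf_eq]
  exact liminf_le_liminf hle hg.isBoundedUnder_ge
    (IsBoundedUnder.isCoboundedUnder_ge ⟨B, by simpa using hB⟩)


lemma bCoef_le_one {n i j k l : ℕ} (hij : i < j) (hkl : k < l) :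
    bCoef (s n) i j k l ≤ 1 := by
  rcases Nat.eq_zero_or_pos n with rfl | hn
  · simp [bCoef, s]
  unfold bCoef
  split_ifs with h1 h2 h3 h4 h5
  · norm_num
  · have p1 := s_sub_pos hn hij
    have p2 := s_sub_pos hn hkl
    have m1 : s n i ≤ s n k := by
      rcases eq_or_lt_of_le h1 with rfl | h; exacts [le_rfl, (s_lt hn h).le]
    have m2 : s n j ≤ s n l := by
      rcases eq_or_lt_of_le h3 with rfl | h; exacts [le_rfl, (s_lt hn h).le]
    have m3 : s n k < s n j := s_lt hn (by omega)
    rw [div_le_one (by nlinarith)]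
    nlinarith
  · have p1 := s_sub_pos hn hij
    have m1 : s n i ≤ s n k := by
      rcases eq_or_lt_of_le h1 with rfl | h; exacts [le_rfl, (s_lt hn h).le]
    have m2 : s n l ≤ s n j := (s_lt hn (by omega)).le
    rw [div_le_one p1]
    linarith
  · norm_num
  · have p1 := s_sub_pos hn hij
    have p2 := s_sub_pos hn hkl
    have m1 : s n k ≤ s n i := (s_lt hn (by omega)).le
    have m2 : s n l ≤ s n j := by
      rcases eq_or_lt_of_le h5 with rfl | h; exacts [le_rfl, (s_lt hn h).le]
    have m3 : s n i < s n l := s_lt hn (by omega)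
    rw [div_le_one (by nlinarith)]
    nlinarith
  · have p2 := s_sub_pos hn hkl
    have m1 : s n k ≤ s n i := (s_lt hn (by omega)).le
    have m2 : s n j ≤ s n l := (s_lt hn (by omega)).le
    rw [div_le_one p2]
    linarith

lemma bCoef_zero_right {n i j k l : ℕ} (hij : i < j) (h : j ≤ k) :
    bCoef (s n) i j k l = 0 := by
  unfold bCoef
  rw [if_pos (by omega), if_pos h]

lemma bCoef_zero_left {n i j k l : ℕ} (hkl : k < l) (h : l ≤ i) :
    bCoef (s n) i j k l = 0 := by
  unfold bCoef
  rw [if_neg (by omega), if_pos h]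


lemma part1_lower {c n : ℕ} (hc : 2 ≤ c) (hn : c + 2 ≤ n) :
    ((n - (c+1) : ℕ) : ℝ) * (1 + ((c:ℝ) - 1) ^ 2 / (c:ℝ) ^ 2) ≤
      ∑ i ∈ Icc 1 (n - c), ∑ j ∈ Icc 1 (n - c), bCoef (s n) i (i + c) j (j + c) := by
  have hn0 : 0 < n := by omega
  have hc0 : ((c:ℕ):ℝ) ≠ 0 := by exact_mod_cast (by omega : c ≠ 0)
  set C : ℝ := 1 + ((c:ℝ) - 1) ^ 2 / (c:ℝ) ^ 2 with hC
  have key : ∀ i ∈ Icc 1 (n - (c+1)),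
      C ≤ ∑ j ∈ Icc 1 (n - c), bCoef (s n) i (i + c) j (j + c) := by
    intro i hi
    rw [mem_Icc] at hi
    have hsub : ({i, i+1} : Finset ℕ) ⊆ Icc 1 (n - c) := by
      intro x hx
      simp only [Finset.mem_insert, Finset.mem_singleton] at hx
      rcases hx with rfl | rfl <;> rw [mem_Icc] <;> omega
    have e : ∑ j ∈ ({i, i+1} : Finset ℕ), bCoef (s n) i (i + c) j (j + c) = C := by
      rw [Finset.sum_pair (by omega)]
      rw [bA hn0 (by omega) le_rfl le_rfl, bC hn0 hc, div_self hc0, hC]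
    rw [← e]
    exact Finset.sum_le_sum_of_subset_of_nonneg hsub
      (fun j _ _ => bCoef_nonneg (by omega) (by omega))
  calc ((n - (c+1) : ℕ) : ℝ) * C = ∑ _i ∈ Icc 1 (n - (c+1)), C := by
        rw [Finset.sum_const, Nat.card_Icc, nsmul_eq_mul]
        norm_num
    _ ≤ ∑ i ∈ Icc 1 (n - (c+1)), ∑ j ∈ Icc 1 (n - c), bCoef (s n) i (i + c) j (j + c) :=
        Finset.sum_le_sum key
    _ ≤ _ := by
        apply Finset.sum_le_sum_of_subset_of_nonneg
        · intro x hx; rw [mem_Icc] at *; omega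
        · intro i _ _
          exact Finset.sum_nonneg fun j _ => bCoef_nonneg (by omega) (by omega)

lemma part1_upper {c n : ℕ} (hc : 2 ≤ c) :
    ∑ i ∈ Icc 1 (n - c), ∑ j ∈ Icc 1 (n - c), bCoef (s n) i (i + c) j (j + c) ≤
      (n : ℝ) * (2 * c + 1) := by
  have row : ∀ i ∈ Icc 1 (n - c),
      ∑ j ∈ Icc 1 (n - c), bCoef (s n) i (i + c) j (j + c) ≤ (2 * (c:ℝ) + 1) := by
    intro i _
    have hz : ∀ j ∈ Icc 1 (n - c), j ∉ (Icc 1 (n-c) ∩ Icc (i - c) (i + c)) →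
        bCoef (s n) i (i + c) j (j + c) = 0 := by
      intro j hj hj2
      rw [Finset.mem_inter] at hj2
      push_neg at hj2
      have := hj2 hj
      rw [mem_Icc] at this hj
      rcases (by omega : i + c ≤ j ∨ j + c ≤ i) with h | h
      · exact bCoef_zero_right (by omega) h
      · exact bCoef_zero_left (by omega) h
    calc ∑ j ∈ Icc 1 (n - c), bCoef (s n) i (i + c) j (j + c)
        = ∑ j ∈ (Icc 1 (n-c) ∩ Icc (i - c) (i + c)), bCoef (s n) i (i + c) j (j + c) :=
          (Finset.sum_subset Finset.inter_subset_left hz).symm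
      _ ≤ ∑ _j ∈ (Icc 1 (n-c) ∩ Icc (i - c) (i + c)), (1:ℝ) :=
          Finset.sum_le_sum fun j _ => bCoef_le_one (by omega) (by omega)
      _ ≤ (2 * (c:ℝ) + 1) := by
          rw [Finset.sum_const, nsmul_eq_mul, mul_one]
          have hcard : (Icc 1 (n-c) ∩ Icc (i - c) (i + c)).card ≤ 2 * c + 1 := by
            calc (Icc 1 (n-c) ∩ Icc (i - c) (i + c)).card
                ≤ (Icc (i - c) (i + c)).card := Finset.card_le_card Finset.inter_subset_right
              _ = i + c + 1 - (i - c) := Nat.card_Icc _ _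
              _ ≤ 2 * c + 1 := by omega
          calc ((Icc 1 (n-c) ∩ Icc (i - c) (i + c)).card : ℝ) ≤ ((2 * c + 1 : ℕ) : ℝ) := by
                exact_mod_cast hcard
            _ = 2 * (c:ℝ) + 1 := by push_cast; ring
  calc ∑ i ∈ Icc 1 (n - c), ∑ j ∈ Icc 1 (n - c), bCoef (s n) i (i + c) j (j + c)
      ≤ ∑ _i ∈ Icc 1 (n - c), (2 * (c:ℝ) + 1) := Finset.sum_le_sum row
    _ ≤ (n : ℝ) * (2 * c + 1) := by
        rw [Finset.sum_const, nsmul_eq_mul]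
        have h1 : ((Icc 1 (n - c)).card : ℝ) ≤ (n : ℝ) := by
          rw [Nat.card_Icc]
          exact_mod_cast (by omega : n - c + 1 - 1 ≤ n)
        have h2 : (0:ℝ) ≤ 2 * (c:ℝ) + 1 := by positivity
        exact mul_le_mul_of_nonneg_right h1 h2


lemma window_ge_one {n K i a b : ℕ} (hn0 : 0 < n) (hi : K + 1 ≤ i)
    (ha : 1 ≤ a) (haK : a ≤ K) (hb : 1 ≤ b) (hbK : b ≤ K) :
    1 ≤ ∑ k ∈ Icc (i - K) (i + K), bCoef (s n) i (i + a) k (k + b) := by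
  have hnn : ∀ k ∈ Icc (i - K) (i + K), (0:ℝ) ≤ bCoef (s n) i (i + a) k (k + b) :=
    fun k _ => bCoef_nonneg (by omega) (by omega)
  rcases le_or_gt b a with hba | hab
  · -- window Icc i (i + (a - b)), each term b/a
    have hsub : Icc i (i + (a - b)) ⊆ Icc (i - K) (i + K) := by
      intro x hx; rw [mem_Icc] at *; omega
    have hval : ∀ k ∈ Icc i (i + (a - b)),
        bCoef (s n) i (i + a) k (k + b) = (b:ℝ)/a := by
      intro k hk; rw [mem_Icc] at hk
      exact bA hn0 hb hk.1 (by omega)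
    have hcnt : ∑ k ∈ Icc i (i + (a - b)), bCoef (s n) i (i + a) k (k + b)
        = ((a - b + 1 : ℕ) : ℝ) * ((b:ℝ)/a) := by
      rw [Finset.sum_congr rfl hval, Finset.sum_const, Nat.card_Icc, nsmul_eq_mul]
      congr 2
      omega
    have hone : (1:ℝ) ≤ ((a - b + 1 : ℕ) : ℝ) * ((b:ℝ)/a) := by
      have hnat : a ≤ (a - b + 1) * b := by
        have h1 : a - b ≤ (a - b) * b := Nat.le_mul_of_pos_right _ (by omega)
        calc a = (a - b) + b := by omega
          _ ≤ (a - b) * b + b := by omega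
          _ = (a - b + 1) * b := by ring
      have ha0 : (0:ℝ) < (a:ℝ) := by exact_mod_cast (by omega : 0 < a)
      rw [mul_div_assoc', le_div_iff₀ ha0, one_mul]
      exact_mod_cast hnat
    calc (1:ℝ) ≤ ((a - b + 1 : ℕ) : ℝ) * ((b:ℝ)/a) := hone
      _ = ∑ k ∈ Icc i (i + (a - b)), bCoef (s n) i (i + a) k (k + b) := hcnt.symm
      _ ≤ _ := Finset.sum_le_sum_of_subset_of_nonneg hsub fun k hk _ => hnn k hk
  · -- window Icc (i - (b - a)) i, each term a/b
    have hsub : Icc (i - (b - a)) i ⊆ Icc (i - K) (i + K) := by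
      intro x hx; rw [mem_Icc] at *; omega
    have hval : ∀ k ∈ Icc (i - (b - a)) i,
        bCoef (s n) i (i + a) k (k + b) = (a:ℝ)/b := by
      intro k hk; rw [mem_Icc] at hk
      exact bB hn0 ha hk.2 (by omega)
    have hcnt : ∑ k ∈ Icc (i - (b - a)) i, bCoef (s n) i (i + a) k (k + b)
        = ((b - a + 1 : ℕ) : ℝ) * ((a:ℝ)/b) := by
      rw [Finset.sum_congr rfl hval, Finset.sum_const, Nat.card_Icc, nsmul_eq_mul]
      congr 2
      omega
    have hone : (1:ℝ) ≤ ((b - a + 1 : ℕ) : ℝ) * ((a:ℝ)/b) := by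
      have hnat : b ≤ (b - a + 1) * a := by
        have h1 : b - a ≤ (b - a) * a := Nat.le_mul_of_pos_right _ (by omega)
        calc b = (b - a) + a := by omega
          _ ≤ (b - a) * a + a := by omega
          _ = (b - a + 1) * a := by ring
      have hb0 : (0:ℝ) < (b:ℝ) := by exact_mod_cast (by omega : 0 < b)
      rw [mul_div_assoc', le_div_iff₀ hb0, one_mul]
      exact_mod_cast hnat
    calc (1:ℝ) ≤ ((b - a + 1 : ℕ) : ℝ) * ((a:ℝ)/b) := hone
      _ = ∑ k ∈ Icc (i - (b - a)) i, bCoef (s n) i (i + a) k (k + b) := hcnt.symm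
      _ ≤ _ := Finset.sum_le_sum_of_subset_of_nonneg hsub fun k hk _ => hnn k hk

lemma window_ge_extra {n K i a : ℕ} (hn0 : 0 < n) (hi : K + 1 ≤ i)
    (ha : 2 ≤ a) (haK : a ≤ K) :
    1 + ((a:ℝ) - 1) ^ 2 / (a:ℝ) ^ 2 ≤
      ∑ k ∈ Icc (i - K) (i + K), bCoef (s n) i (i + a) k (k + a) := by
  have ha0 : ((a:ℕ):ℝ) ≠ 0 := by exact_mod_cast (by omega : a ≠ 0)
  have hsub : ({i, i+1} : Finset ℕ) ⊆ Icc (i - K) (i + K) := by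
    intro x hx
    simp only [Finset.mem_insert, Finset.mem_singleton] at hx
    rcases hx with rfl | rfl <;> rw [mem_Icc] <;> omega
  have e : ∑ k ∈ ({i, i+1} : Finset ℕ), bCoef (s n) i (i + a) k (k + a)
      = 1 + ((a:ℝ) - 1) ^ 2 / (a:ℝ) ^ 2 := by
    rw [Finset.sum_pair (by omega)]
    rw [bA hn0 (by omega) le_rfl le_rfl, bC hn0 ha, div_self ha0]
  rw [← e]
  exact Finset.sum_le_sum_of_subset_of_nonneg hsub
    (fun k _ _ => bCoef_nonneg (by omega) (by omega))


lemma H_step {n K i a : ℕ} (w : ℕ → ℝ) (hw : ∀ b ∈ Icc 1 K, 0 ≤ w b)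
    (hK : 1 ≤ K) (hi : K + 1 ≤ i) (hi2 : i + 2*K ≤ n) (ha : 1 ≤ a) :
    ∑ b ∈ Icc 1 K, w b * (∑ k ∈ Icc (i - K) (i + K), bCoef (s n) i (i + a) k (k + b))
      ≤ ∑ k ∈ Icc 1 (n-1), ∑ l ∈ Icc (k+1) (min n (k+K)),
          w (l - k) * bCoef (s n) i (i + a) k l := by
  have h1 : ∀ k ∈ Icc (i - K) (i + K),
      ∑ l ∈ Icc (k+1) (min n (k+K)), w (l - k) * bCoef (s n) i (i + a) k l
        = ∑ b ∈ Icc 1 K, w b * bCoef (s n) i (i + a) k (k + b) := by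
    intro k hk; rw [mem_Icc] at hk
    rw [min_eq_right (by omega : k + K ≤ n)]
    rw [show Icc (k+1) (k+K) = Finset.map (addLeftEmbedding k) (Icc 1 K) by
      rw [Finset.map_add_left_Icc], Finset.sum_map]
    apply Finset.sum_congr rfl
    intro b _
    simp [addLeftEmbedding_apply]
  calc ∑ b ∈ Icc 1 K, w b * (∑ k ∈ Icc (i - K) (i + K), bCoef (s n) i (i + a) k (k + b))
      = ∑ k ∈ Icc (i - K) (i + K), ∑ b ∈ Icc 1 K, w b * bCoef (s n) i (i + a) k (k + b) := by
        rw [Finset.sum_comm]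
        exact Finset.sum_congr rfl fun b _ => Finset.mul_sum _ _ _
    _ = ∑ k ∈ Icc (i - K) (i + K),
          ∑ l ∈ Icc (k+1) (min n (k+K)), w (l - k) * bCoef (s n) i (i + a) k l :=
        Finset.sum_congr rfl fun k hk => (h1 k hk).symm
    _ ≤ _ := by
        apply Finset.sum_le_sum_of_subset_of_nonneg
        · intro x hx; rw [mem_Icc] at *; omega
        · intro k hk _
          apply Finset.sum_nonneg
          intro l hl
          rw [mem_Icc] at hl
          have hlK : l - k ∈ Icc 1 K := by
            rw [mem_Icc]
            have := hl.2
            have := min_le_right n (k+K)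
            omega
          exact mul_nonneg (hw _ hlK) (bCoef_nonneg (by omega) (by omega))

lemma H_ge_one {n K i a : ℕ} (w : ℕ → ℝ) (hw : ∀ b ∈ Icc 1 K, 0 ≤ w b)
    (hn0 : 0 < n) (hK : 1 ≤ K) (hi : K + 1 ≤ i) (hi2 : i + 2*K ≤ n)
    (ha : 1 ≤ a) (haK : a ≤ K) :
    ∑ b ∈ Icc 1 K, w b
      ≤ ∑ k ∈ Icc 1 (n-1), ∑ l ∈ Icc (k+1) (min n (k+K)),
          w (l - k) * bCoef (s n) i (i + a) k l := by
  refine le_trans ?_ (H_step w hw hK hi hi2 ha)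
  apply Finset.sum_le_sum
  intro b hb
  rw [mem_Icc] at hb
  calc w b = w b * 1 := (mul_one _).symm
    _ ≤ _ := mul_le_mul_of_nonneg_left
        (window_ge_one hn0 hi ha haK hb.1 hb.2) (hw b (by rw [mem_Icc]; omega))

lemma H_ge_extra {n K i a : ℕ} (w : ℕ → ℝ) (hw : ∀ b ∈ Icc 1 K, 0 ≤ w b)
    (hn0 : 0 < n) (hK : 1 ≤ K) (hi : K + 1 ≤ i) (hi2 : i + 2*K ≤ n)
    (ha : 2 ≤ a) (haK : a ≤ K) :
    (∑ b ∈ Icc 1 K, w b) + w a * (((a:ℝ) - 1) ^ 2 / (a:ℝ) ^ 2)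
      ≤ ∑ k ∈ Icc 1 (n-1), ∑ l ∈ Icc (k+1) (min n (k+K)),
          w (l - k) * bCoef (s n) i (i + a) k l := by
  refine le_trans ?_ (H_step w hw hK hi hi2 (by omega))
  have haI : a ∈ Icc 1 K := by rw [mem_Icc]; omega
  rw [show ∑ b ∈ Icc 1 K, w b = w a + ∑ b ∈ (Icc 1 K).erase a, w b from
        (Finset.add_sum_erase _ w haI).symm,
      show ∑ b ∈ Icc 1 K, w b * (∑ k ∈ Icc (i - K) (i + K), bCoef (s n) i (i + a) k (k + b))
          = w a * (∑ k ∈ Icc (i - K) (i + K), bCoef (s n) i (i + a) k (k + a))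
            + ∑ b ∈ (Icc 1 K).erase a,
                w b * (∑ k ∈ Icc (i - K) (i + K), bCoef (s n) i (i + a) k (k + b)) from
        (Finset.add_sum_erase _ _ haI).symm]
  have h1 : w a + w a * (((a:ℝ) - 1) ^ 2 / (a:ℝ) ^ 2)
      ≤ w a * (∑ k ∈ Icc (i - K) (i + K), bCoef (s n) i (i + a) k (k + a)) := by
    calc w a + w a * (((a:ℝ) - 1) ^ 2 / (a:ℝ) ^ 2)
        = w a * (1 + ((a:ℝ) - 1) ^ 2 / (a:ℝ) ^ 2) := by ring
      _ ≤ _ := mul_le_mul_of_nonneg_left (window_ge_extra hn0 hi ha haK) (hw a haI)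
  have h2 : ∑ b ∈ (Icc 1 K).erase a, w b
      ≤ ∑ b ∈ (Icc 1 K).erase a, w b * (∑ k ∈ Icc (i - K) (i + K), bCoef (s n) i (i + a) k (k + b)) := by
    apply Finset.sum_le_sum
    intro b hb
    have hb' := Finset.mem_of_mem_erase hb
    rw [mem_Icc] at hb'
    calc w b = w b * 1 := (mul_one _).symm
      _ ≤ _ := mul_le_mul_of_nonneg_left
          (window_ge_one hn0 hi (by omega) haK hb'.1 hb'.2) (hw b (Finset.mem_of_mem_erase hb))
  linarith


lemma F_ge {n K i k0 : ℕ} (w : ℕ → ℝ) (hw : ∀ b ∈ Icc 1 K, 0 ≤ w b)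
    (hn0 : 0 < n) (hK : 2 ≤ K) (hk0 : 2 ≤ k0) (hk0K : k0 ≤ K)
    (hi : K + 1 ≤ i) (hi2 : i + 2*K ≤ n) :
    (∑ b ∈ Icc 1 K, w b) ^ 2 + (w k0) ^ 2 * (((k0:ℝ) - 1) ^ 2 / (k0:ℝ) ^ 2)
      ≤ ∑ j ∈ Icc (i+1) (min n (i+K)), ∑ k ∈ Icc 1 (n-1),
          ∑ l ∈ Icc (k+1) (min n (k+K)),
            w (j - i) * w (l - k) * bCoef (s n) i j k l := by
  set W : ℝ := ∑ b ∈ Icc 1 K, w b with hW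
  set H : ℕ → ℝ := fun a => ∑ k ∈ Icc 1 (n-1), ∑ l ∈ Icc (k+1) (min n (k+K)),
      w (l - k) * bCoef (s n) i (i + a) k l with hH
  have hmin : min n (i + K) = i + K := min_eq_right (by omega)
  have hre : ∑ j ∈ Icc (i+1) (min n (i+K)), ∑ k ∈ Icc 1 (n-1),
        ∑ l ∈ Icc (k+1) (min n (k+K)), w (j - i) * w (l - k) * bCoef (s n) i j k l
      = ∑ a ∈ Icc 1 K, w a * H a := by
    rw [hmin]
    rw [show Icc (i+1) (i+K) = Finset.map (addLeftEmbedding i) (Icc 1 K) by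
      rw [Finset.map_add_left_Icc], Finset.sum_map]
    apply Finset.sum_congr rfl
    intro a _
    simp only [addLeftEmbedding_apply, Nat.add_sub_cancel_left, hH, Finset.mul_sum]
    apply Finset.sum_congr rfl
    intro k _
    apply Finset.sum_congr rfl
    intro l _
    ring
  rw [hre]
  have hk0I : k0 ∈ Icc 1 K := by rw [mem_Icc]; omega
  rw [show ∑ a ∈ Icc 1 K, w a * H a
      = w k0 * H k0 + ∑ a ∈ (Icc 1 K).erase k0, w a * H a from
      (Finset.add_sum_erase _ _ hk0I).symm]
  have h1 : w k0 * (W + w k0 * (((k0:ℝ) - 1) ^ 2 / (k0:ℝ) ^ 2)) ≤ w k0 * H k0 :=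
    mul_le_mul_of_nonneg_left (H_ge_extra w hw hn0 (by omega) hi hi2 hk0 hk0K)
      (hw k0 hk0I)
  have h2 : (∑ a ∈ (Icc 1 K).erase k0, w a) * W ≤ ∑ a ∈ (Icc 1 K).erase k0, w a * H a := by
    rw [Finset.sum_mul]
    apply Finset.sum_le_sum
    intro a ha
    have ha' := Finset.mem_of_mem_erase ha
    rw [mem_Icc] at ha'
    exact mul_le_mul_of_nonneg_left
      (H_ge_one w hw hn0 (by omega) hi hi2 ha'.1 ha'.2) (hw a (Finset.mem_of_mem_erase ha))
  have h3 : w k0 + ∑ a ∈ (Icc 1 K).erase k0, w a = W := Finset.add_sum_erase _ w hk0I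
  have h4 : W ^ 2 = w k0 * W + (∑ a ∈ (Icc 1 K).erase k0, w a) * W := by
    rw [← h3]; ring
  have h1' : w k0 * W + w k0 ^ 2 * (((k0:ℝ) - 1) ^ 2 / (k0:ℝ) ^ 2) ≤ w k0 * H k0 := by
    calc w k0 * W + w k0 ^ 2 * (((k0:ℝ) - 1) ^ 2 / (k0:ℝ) ^ 2)
        = w k0 * (W + w k0 * (((k0:ℝ) - 1) ^ 2 / (k0:ℝ) ^ 2)) := by ring
      _ ≤ w k0 * H k0 := h1
  linarith

lemma part2_lower {n K k0 : ℕ} (w : ℕ → ℝ) (hw : ∀ b ∈ Icc 1 K, 0 ≤ w b)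
    (hK : 2 ≤ K) (hk0 : 2 ≤ k0) (hk0K : k0 ≤ K) (hn : 3*K + 1 ≤ n) :
    ((n - 3*K : ℕ) : ℝ) *
        ((∑ b ∈ Icc 1 K, w b) ^ 2 + (w k0) ^ 2 * (((k0:ℝ) - 1) ^ 2 / (k0:ℝ) ^ 2))
      ≤ ∑ i ∈ Icc 1 (n-1), ∑ j ∈ Icc (i+1) (min n (i+K)), ∑ k ∈ Icc 1 (n-1),
          ∑ l ∈ Icc (k+1) (min n (k+K)),
            w (j - i) * w (l - k) * bCoef (s n) i j k l := by
  have hn0 : 0 < n := by omega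
  set C : ℝ := (∑ b ∈ Icc 1 K, w b) ^ 2 + (w k0) ^ 2 * (((k0:ℝ) - 1) ^ 2 / (k0:ℝ) ^ 2)
    with hC
  calc ((n - 3*K : ℕ) : ℝ) * C = ∑ _i ∈ Icc (K+1) (n - 2*K), C := by
        rw [Finset.sum_const, Nat.card_Icc, nsmul_eq_mul]
        congr 2
        omega
    _ ≤ ∑ i ∈ Icc (K+1) (n - 2*K), ∑ j ∈ Icc (i+1) (min n (i+K)), ∑ k ∈ Icc 1 (n-1),
          ∑ l ∈ Icc (k+1) (min n (k+K)),
            w (j - i) * w (l - k) * bCoef (s n) i j k l := by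
        apply Finset.sum_le_sum
        intro i hi
        rw [mem_Icc] at hi
        exact F_ge w hw hn0 hK hk0 hk0K hi.1 (by omega)
    _ ≤ _ := by
        apply Finset.sum_le_sum_of_subset_of_nonneg
        · intro x hx; rw [mem_Icc] at *; omega
        · intro i _ _
          apply Finset.sum_nonneg; intro j hj
          apply Finset.sum_nonneg; intro k _
          apply Finset.sum_nonneg; intro l hl
          rw [mem_Icc] at hj hl
          have hji : j - i ∈ Icc 1 K := by
            rw [mem_Icc]
            have := hj.2; have := min_le_right n (i+K); omega
          have hlk : l - k ∈ Icc 1 K := by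
            rw [mem_Icc]
            have := hl.2; have := min_le_right n (k+K); omega
          exact mul_nonneg (mul_nonneg (hw _ hji) (hw _ hlk))
            (bCoef_nonneg (by omega) (by omega))


lemma part2_upper {n K : ℕ} (w : ℕ → ℝ) (hw : ∀ b ∈ Icc 1 K, 0 ≤ w b) (hK : 1 ≤ K) :
    ∑ i ∈ Icc 1 (n-1), ∑ j ∈ Icc (i+1) (min n (i+K)), ∑ k ∈ Icc 1 (n-1),
        ∑ l ∈ Icc (k+1) (min n (k+K)),
          w (j - i) * w (l - k) * bCoef (s n) i j k l
      ≤ (n : ℝ) * ((K:ℝ) * (2*(K:ℝ) * ((K:ℝ) * ((∑ b ∈ Icc 1 K, w b) ^ 2)))) := by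
  set M : ℝ := ∑ b ∈ Icc 1 K, w b with hM
  have hM0 : 0 ≤ M := Finset.sum_nonneg hw
  have hMle : ∀ d ∈ Icc 1 K, w d ≤ M := fun d hd =>
    Finset.single_le_sum hw hd
  -- bound for the innermost double sum, for fixed i < j
  have inner2 : ∀ i j : ℕ, i < j → j ≤ i + K →
      ∑ k ∈ Icc 1 (n-1), ∑ l ∈ Icc (k+1) (min n (k+K)),
          w (j - i) * w (l - k) * bCoef (s n) i j k l
        ≤ 2*(K:ℝ) * ((K:ℝ) * M^2) := by
    intro i j hij hjK
    have hrow : ∀ k : ℕ, 0 < k →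
        ∑ l ∈ Icc (k+1) (min n (k+K)), w (j - i) * w (l - k) * bCoef (s n) i j k l
          ≤ (K:ℝ) * M^2 := by
      intro k hk
      have hterm : ∀ l ∈ Icc (k+1) (min n (k+K)),
          w (j - i) * w (l - k) * bCoef (s n) i j k l ≤ M^2 := by
        intro l hl
        rw [mem_Icc] at hl
        have hlk : l - k ∈ Icc 1 K := by
          rw [mem_Icc]; have := hl.2; have := min_le_right n (k+K); omega
        have hji : j - i ∈ Icc 1 K := by rw [mem_Icc]; omega
        have hb1 : bCoef (s n) i j k l ≤ 1 := bCoef_le_one hij (by omega)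
        have hb0 : 0 ≤ bCoef (s n) i j k l := bCoef_nonneg hij (by omega)
        calc w (j - i) * w (l - k) * bCoef (s n) i j k l
            ≤ w (j - i) * w (l - k) * 1 :=
              mul_le_mul_of_nonneg_left hb1 (mul_nonneg (hw _ hji) (hw _ hlk))
          _ = w (j - i) * w (l - k) := mul_one _
          _ ≤ M * M := mul_le_mul (hMle _ hji) (hMle _ hlk) (hw _ hlk) hM0
          _ = M^2 := (sq M).symm
      calc ∑ l ∈ Icc (k+1) (min n (k+K)), w (j - i) * w (l - k) * bCoef (s n) i j k l
          ≤ ∑ _l ∈ Icc (k+1) (min n (k+K)), M^2 := Finset.sum_le_sum hterm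
        _ = ((Icc (k+1) (min n (k+K))).card : ℝ) * M^2 := by
            rw [Finset.sum_const, nsmul_eq_mul]
        _ ≤ (K:ℝ) * M^2 := by
            apply mul_le_mul_of_nonneg_right _ (by positivity)
            have hc : (Icc (k+1) (min n (k+K))).card ≤ K := by
              rw [Nat.card_Icc]
              have := min_le_right n (k+K)
              omega
            exact_mod_cast hc
    have hzero : ∀ k ∈ Icc 1 (n-1), k ∉ Icc 1 (n-1) ∩ Icc (j - 2*K) (j - 1) →
        ∑ l ∈ Icc (k+1) (min n (k+K)), w (j - i) * w (l - k) * bCoef (s n) i j k l = 0 := by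
      intro k hk hk2
      rw [Finset.mem_inter] at hk2
      push_neg at hk2
      have hk3 := hk2 hk
      rw [mem_Icc] at hk hk3
      apply Finset.sum_eq_zero
      intro l hl
      rw [mem_Icc] at hl
      rcases (by omega : j ≤ k ∨ k + K < j - 2*K + K) with h | h
      · rw [bCoef_zero_right hij h, mul_zero]
      · -- k + K < i is what we need: from k < j - 2*K and j ≤ i + K: k + K < j - K ≤ i
        have hli : l ≤ i := by
          have := min_le_right n (k+K)
          omega
        rw [bCoef_zero_left (by omega) hli, mul_zero]
    calc ∑ k ∈ Icc 1 (n-1), ∑ l ∈ Icc (k+1) (min n (k+K)),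
            w (j - i) * w (l - k) * bCoef (s n) i j k l
        = ∑ k ∈ Icc 1 (n-1) ∩ Icc (j - 2*K) (j - 1), ∑ l ∈ Icc (k+1) (min n (k+K)),
            w (j - i) * w (l - k) * bCoef (s n) i j k l :=
          (Finset.sum_subset Finset.inter_subset_left hzero).symm
      _ ≤ ∑ _k ∈ Icc 1 (n-1) ∩ Icc (j - 2*K) (j - 1), (K:ℝ) * M^2 := by
          apply Finset.sum_le_sum
          intro k hk
          rw [Finset.mem_inter, mem_Icc] at hk
          exact hrow k (by omega)
      _ ≤ 2*(K:ℝ) * ((K:ℝ) * M^2) := by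
          rw [Finset.sum_const, nsmul_eq_mul]
          have hc : (Icc 1 (n-1) ∩ Icc (j - 2*K) (j - 1)).card ≤ 2*K := by
            calc (Icc 1 (n-1) ∩ Icc (j - 2*K) (j - 1)).card
                ≤ (Icc (j - 2*K) (j - 1)).card := Finset.card_le_card Finset.inter_subset_right
              _ = j - 1 + 1 - (j - 2*K) := Nat.card_Icc _ _
              _ ≤ 2*K := by omega
          calc ((Icc 1 (n-1) ∩ Icc (j - 2*K) (j - 1)).card : ℝ) * ((K:ℝ) * M^2)
              ≤ ((2*K : ℕ) : ℝ) * ((K:ℝ) * M^2) := by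
                apply mul_le_mul_of_nonneg_right _ (by positivity)
                exact_mod_cast hc
            _ = 2*(K:ℝ) * ((K:ℝ) * M^2) := by push_cast; ring
  have hFrow : ∀ i ∈ Icc 1 (n-1),
      ∑ j ∈ Icc (i+1) (min n (i+K)), ∑ k ∈ Icc 1 (n-1),
          ∑ l ∈ Icc (k+1) (min n (k+K)), w (j - i) * w (l - k) * bCoef (s n) i j k l
        ≤ (K:ℝ) * (2*(K:ℝ) * ((K:ℝ) * M^2)) := by
    intro i _
    calc ∑ j ∈ Icc (i+1) (min n (i+K)), ∑ k ∈ Icc 1 (n-1),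
            ∑ l ∈ Icc (k+1) (min n (k+K)), w (j - i) * w (l - k) * bCoef (s n) i j k l
        ≤ ∑ _j ∈ Icc (i+1) (min n (i+K)), 2*(K:ℝ) * ((K:ℝ) * M^2) := by
          apply Finset.sum_le_sum
          intro j hj
          rw [mem_Icc] at hj
          have := min_le_right n (i+K)
          exact inner2 i j (by omega) (by omega)
      _ ≤ (K:ℝ) * (2*(K:ℝ) * ((K:ℝ) * M^2)) := by
          rw [Finset.sum_const, nsmul_eq_mul]
          apply mul_le_mul_of_nonneg_right _ (by positivity)
          have hc : (Icc (i+1) (min n (i+K))).card ≤ K := by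
            rw [Nat.card_Icc]
            have := min_le_right n (i+K)
            omega
          exact_mod_cast hc
  calc ∑ i ∈ Icc 1 (n-1), ∑ j ∈ Icc (i+1) (min n (i+K)), ∑ k ∈ Icc 1 (n-1),
          ∑ l ∈ Icc (k+1) (min n (k+K)), w (j - i) * w (l - k) * bCoef (s n) i j k l
      ≤ ∑ _i ∈ Icc 1 (n-1), (K:ℝ) * (2*(K:ℝ) * ((K:ℝ) * M^2)) := Finset.sum_le_sum hFrow
    _ ≤ (n : ℝ) * ((K:ℝ) * (2*(K:ℝ) * ((K:ℝ) * M^2))) := by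
        rw [Finset.sum_const, nsmul_eq_mul]
        apply mul_le_mul_of_nonneg_right _ (by positivity)
        rw [Nat.card_Icc]
        exact_mod_cast (by omega : n - 1 + 1 - 1 ≤ n)
end EqP


open EqP in
/-- Lemma 6: for equispaced points `s_i = i/n` and `2 ≤ K < ∞` with some
`w_k > 0` for `k ≥ 2`, one has
`lim inf (1/n) ∑_{i=1}^{n-k} ∑_{j=1}^{n-k} b_{i,i+k,j,j+k} ≥ 1 + (k-1)²/k²`
for every `2 ≤ k ≤ K`; consequently `lim inf A_n > 2 (∑_{k=1}^K w_k)²`. -/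
theorem equispaced_strictly_larger_variance (K : ℕ) (hK : 2 ≤ K) (w : ℕ → ℝ)
    (hw : ∀ k ∈ Finset.Icc 1 K, 0 ≤ w k)
    (hw2 : ∃ k ∈ Finset.Icc 2 K, 0 < w k) :
    (∀ k : ℕ, 2 ≤ k → k ≤ K →
      1 + ((k : ℝ) - 1) ^ 2 / (k : ℝ) ^ 2 ≤
        Filter.atTop.liminf (fun n : ℕ =>
          (1 / (n : ℝ)) *
            ∑ i ∈ Finset.Icc 1 (n - k), ∑ j ∈ Finset.Icc 1 (n - k),
              bCoef (fun m => (m : ℝ) / (n : ℝ)) i (i + k) j (j + k))) ∧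
    2 * (∑ k ∈ Finset.Icc 1 K, w k) ^ 2 <
      Filter.atTop.liminf (fun n : ℕ =>
        (2 / (n : ℝ)) *
          ∑ i ∈ Finset.Icc 1 (n - 1), ∑ j ∈ Finset.Icc (i + 1) (min n (i + K)),
            ∑ k ∈ Finset.Icc 1 (n - 1), ∑ l ∈ Finset.Icc (k + 1) (min n (k + K)),
              w (j - i) * w (l - k) *
                bCoef (fun m => (m : ℝ) / (n : ℝ)) i j k l) := by
  constructor
  · intro c hc2 hcK
    set C : ℝ := 1 + ((c:ℝ) - 1) ^ 2 / (c:ℝ) ^ 2 with hCdef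
    apply liminf_ge (g := fun n : ℕ => ((n - (c+1) : ℕ) : ℝ) / n * C) (B := 2*(c:ℝ) + 1)
    · filter_upwards [eventually_ge_atTop (c+2)] with n hn
      have h := part1_lower hc2 hn
      have hn' : (0:ℝ) ≤ 1/(n:ℝ) := by positivity
      calc ((n - (c+1) : ℕ) : ℝ) / n * C = (1/(n:ℝ)) * (((n - (c+1) : ℕ) : ℝ) * C) := by
            ring
        _ ≤ (1/(n:ℝ)) * ∑ i ∈ Finset.Icc 1 (n - c), ∑ j ∈ Finset.Icc 1 (n - c),
              bCoef (s n) i (i + c) j (j + c) := mul_le_mul_of_nonneg_left h hn'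
    · filter_upwards [eventually_ge_atTop 1] with n hn
      have hn0 : ((n:ℕ):ℝ) ≠ 0 := by exact_mod_cast (by omega : n ≠ 0)
      have h := part1_upper (n := n) hc2
      calc (1/(n:ℝ)) * ∑ i ∈ Finset.Icc 1 (n - c), ∑ j ∈ Finset.Icc 1 (n - c),
              bCoef (s n) i (i + c) j (j + c)
          ≤ (1/(n:ℝ)) * ((n:ℝ) * (2*(c:ℝ) + 1)) :=
            mul_le_mul_of_nonneg_left h (by positivity)
        _ = 2*(c:ℝ) + 1 := by field_simp
    · exact aux_tendsto (c+1) C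
  · obtain ⟨k0, hk0mem, hk0pos⟩ := hw2
    rw [Finset.mem_Icc] at hk0mem
    set W : ℝ := ∑ k ∈ Finset.Icc 1 K, w k with hWdef
    set e0 : ℝ := ((k0:ℝ) - 1) ^ 2 / (k0:ℝ) ^ 2 with he0def
    set C : ℝ := W ^ 2 + (w k0) ^ 2 * e0 with hCdef
    set Q : ℝ := (K:ℝ) * (2*(K:ℝ) * ((K:ℝ) * W ^ 2)) with hQdef
    have hCgt : W ^ 2 < C := by
      have hk2 : (2:ℝ) ≤ (k0:ℝ) := by exact_mod_cast hk0mem.1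
      have h1 : (0:ℝ) < e0 := by
        rw [he0def]
        apply div_pos (by nlinarith) (by nlinarith)
      rw [hCdef]
      have := mul_pos (pow_pos hk0pos 2) h1
      linarith
    have hlim : 2 * C ≤ Filter.atTop.liminf (fun n : ℕ =>
        (2 / (n : ℝ)) *
          ∑ i ∈ Finset.Icc 1 (n - 1), ∑ j ∈ Finset.Icc (i + 1) (min n (i + K)),
            ∑ k ∈ Finset.Icc 1 (n - 1), ∑ l ∈ Finset.Icc (k + 1) (min n (k + K)),
              w (j - i) * w (l - k) * bCoef (fun m => (m : ℝ) / (n : ℝ)) i j k l) := by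
      apply liminf_ge (g := fun n : ℕ => ((n - 3*K : ℕ) : ℝ) / n * (2 * C)) (B := 2 * Q)
      · filter_upwards [eventually_ge_atTop (3*K+1)] with n hn
        have h := part2_lower w hw hK hk0mem.1 hk0mem.2 hn
        have hn' : (0:ℝ) ≤ 2/(n:ℝ) := by positivity
        calc ((n - 3*K : ℕ) : ℝ) / n * (2 * C)
            = (2/(n:ℝ)) * (((n - 3*K : ℕ) : ℝ) * C) := by ring
          _ ≤ _ := mul_le_mul_of_nonneg_left h hn'
      · filter_upwards [eventually_ge_atTop 1] with n hn
        have hn0 : ((n:ℕ):ℝ) ≠ 0 := by exact_mod_cast (by omega : n ≠ 0)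
        have h := part2_upper (n := n) w hw (by omega)
        calc (2/(n:ℝ)) *
              ∑ i ∈ Finset.Icc 1 (n - 1), ∑ j ∈ Finset.Icc (i + 1) (min n (i + K)),
                ∑ k ∈ Finset.Icc 1 (n - 1), ∑ l ∈ Finset.Icc (k + 1) (min n (k + K)),
                  w (j - i) * w (l - k) * bCoef (s n) i j k l
            ≤ (2/(n:ℝ)) * ((n:ℝ) * Q) := mul_le_mul_of_nonneg_left h (by positivity)
          _ = 2 * Q := by field_simp
      · exact aux_tendsto (3*K) (2 * C)
    calc 2 * W ^ 2 < 2 * C := by linarith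
      _ ≤ _ := hlim
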